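/- For the covariant Pauli channel Λ, the minimum over all Bloch vectors (x,y,z) with x² + y² + z² ≤ 1 of the von Neumann entropy S(Λ(ρ(x,y,z))) equals h(ξ), where ξ = (1 + p0 − p3)/2 if (p0−p3)² ≥ (2p0+2p3−1)², and ξ = p0 + p3 otherwise. -/

import Mathlib

open Matrix

noncomputable section

/-- Pauli matrix X. -/
def PX : Matrix (Fin 2) (Fin 2) ℂ := !![0, 1; 1, 0]

/-- Pauli matrix Y. -/
def PY : Matrix (Fin 2) (Fin 2) ℂ := !![0, -Complex.I; Complex.I, 0]

/-- Pauli matrix Z. -/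
def PZ : Matrix (Fin 2) (Fin 2) ℂ := !![1, 0; 0, -1]

/-- The covariant Pauli channel `Λ(ρ) = p₀ ρ + p₁ (XρX + YρY) + p₃ ZρZ`. -/
def pauliChannel (p0 p1 p3 : ℝ) (ρ : Matrix (Fin 2) (Fin 2) ℂ) : Matrix (Fin 2) (Fin 2) ℂ :=
  (p0 : ℂ) • ρ + (p1 : ℂ) • (PX * ρ * PX + PY * ρ * PY) + (p3 : ℂ) • (PZ * ρ * PZ)

/-- The qubit state with Bloch vector `(x, y, z)`. -/
def blochState (x y z : ℝ) : Matrix (Fin 2) (Fin 2) ℂ :=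
  (1 / 2 : ℂ) • ((1 : Matrix (Fin 2) (Fin 2) ℂ) + (x : ℂ) • PX + (y : ℂ) • PY + (z : ℂ) • PZ)

/-- Von Neumann entropy (base-2) of a Hermitian matrix, via its eigenvalues. -/
def vN {n : ℕ} (A : Matrix (Fin n) (Fin n) ℂ) : ℝ :=
  if h : A.IsHermitian then -∑ i, h.eigenvalues i * Real.logb 2 (h.eigenvalues i) else 0

/-- Multiset of eigenvalues (with multiplicity) of a Hermitian matrix. -/
def eigs {n : ℕ} (A : Matrix (Fin n) (Fin n) ℂ) : Multiset ℝ :=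
  if h : A.IsHermitian then Finset.univ.val.map h.eigenvalues else 0

/-- The binary entropy function `h(t) = -t log₂ t - (1-t) log₂ (1-t)`. -/
def binEnt (t : ℝ) : ℝ := -(t * Real.logb 2 t) - (1 - t) * Real.logb 2 (1 - t)

/-! ### Auxiliary material -/

/-- An explicit Hermitian 2×2 matrix. -/
def HM (t u v w : ℝ) : Matrix (Fin 2) (Fin 2) ℂ :=
  !![(t:ℂ), (u:ℂ) - (v:ℂ)*Complex.I; (u:ℂ) + (v:ℂ)*Complex.I, (w:ℂ)]

lemma channel_eq (p0 p1 p3 x y z : ℝ) :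
    pauliChannel p0 p1 p3 (blochState x y z) =
      HM ((p0+2*p1+p3 + (p0-2*p1+p3)*z)/2) ((p0-p3)*x/2) ((p0-p3)*y/2)
         ((p0+2*p1+p3 - (p0-2*p1+p3)*z)/2) := by
  ext i j
  fin_cases i <;> fin_cases j <;>
    simp [pauliChannel, blochState, PX, PY, PZ, HM, Matrix.mul_apply, Matrix.vecMul,
      dotProduct, Fin.sum_univ_two, Matrix.one_apply]
  · linear_combination ((z:ℂ)*(p1:ℂ)/2 - (p1:ℂ)/2) * Complex.I_sq
  · linear_combination ((x:ℂ)*(p1:ℂ)/2 + (y:ℂ)*Complex.I*(p1:ℂ)/2) * Complex.I_sq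
  · linear_combination ((x:ℂ)*(p1:ℂ)/2 - (y:ℂ)*Complex.I*(p1:ℂ)/2) * Complex.I_sq
  · linear_combination (-(z:ℂ)*(p1:ℂ)/2 - (p1:ℂ)/2) * Complex.I_sq

lemma HM_isHermitian (t u v w : ℝ) : (HM t u v w).IsHermitian := by
  ext i j
  fin_cases i <;> fin_cases j <;>
    simp [HM, Matrix.IsHermitian, Matrix.conjTranspose_apply, Complex.ext_iff]

lemma HM_trace (t u v w : ℝ) : (HM t u v w).trace = ((t + w : ℝ) : ℂ) := by
  simp [HM, Matrix.trace_fin_two]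

lemma HM_det (t u v w : ℝ) : (HM t u v w).det = ((t*w - u^2 - v^2 : ℝ) : ℂ) := by
  simp [HM, Matrix.det_fin_two]
  linear_combination ((v:ℂ)^2) * Complex.I_sq

lemma trace_eq_sum_eigs {n : ℕ} {A : Matrix (Fin n) (Fin n) ℂ} (hA : A.IsHermitian) :
    A.trace = ∑ i, (hA.eigenvalues i : ℂ) := by
  nth_rewrite 1 [hA.spectral_theorem]
  rw [Unitary.conjStarAlgAut_apply]
  rw [Matrix.trace_mul_comm, ← mul_assoc]
  rw [show (star (hA.eigenvectorUnitary : Matrix (Fin n) (Fin n) ℂ)) *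
      (hA.eigenvectorUnitary : Matrix (Fin n) (Fin n) ℂ) = 1 from
    (Unitary.mem_iff.mp hA.eigenvectorUnitary.2).1, one_mul, Matrix.trace_diagonal]
  rfl

lemma vN_HM (t u v w r : ℝ) (htr : t + w = 1) (hdet : t*w - u^2 - v^2 = (1 - r^2)/4) :
    vN (HM t u v w) = binEnt ((1+r)/2) := by
  have h := HM_isHermitian t u v w
  rw [vN, dif_pos h]
  set μ := h.eigenvalues with hμ
  have hsum : μ 0 + μ 1 = 1 := by
    have := trace_eq_sum_eigs h
    rw [HM_trace, htr, Fin.sum_univ_two, ← hμ] at this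
    exact_mod_cast this.symm
  have hprod : μ 0 * μ 1 = (1 - r^2)/4 := by
    have := h.det_eq_prod_eigenvalues
    rw [HM_det, hdet, Fin.prod_univ_two, ← hμ] at this
    have h2 : ((μ 0 * μ 1 : ℝ) : ℂ) = (((1 - r^2)/4 : ℝ) : ℂ) := by
      rw [this]; push_cast; rfl
    exact Complex.ofReal_inj.mp h2
  have h1 : μ 1 = 1 - μ 0 := by linarith
  have hfac : (μ 0 - (1+r)/2) * (μ 0 - (1-r)/2) = 0 := by
    rw [h1] at hprod
    linear_combination -hprod
  rw [Fin.sum_univ_two, h1]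
  rcases mul_eq_zero.mp hfac with hc | hc
  · have : μ 0 = (1+r)/2 := by linarith
    rw [this, binEnt]
    have : 1 - (1+r)/2 = (1-r)/2 := by ring
    rw [this]
    ring
  · have : μ 0 = (1-r)/2 := by linarith
    rw [this, binEnt]
    have e1 : 1 - (1-r)/2 = (1+r)/2 := by ring
    have e2 : 1 - (1+r)/2 = (1-r)/2 := by ring
    rw [e1, e2]
    ring

lemma binEnt_eq (t : ℝ) : binEnt t = Real.binEntropy t / Real.log 2 := by
  rw [binEnt, Real.binEntropy, Real.logb, Real.logb, Real.log_inv, Real.log_inv]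
  ring

lemma binEnt_one_sub (t : ℝ) : binEnt (1 - t) = binEnt t := by
  rw [binEnt_eq, binEnt_eq, Real.binEntropy_one_sub]

lemma binEnt_abs (c : ℝ) : binEnt ((1+c)/2) = binEnt ((1+|c|)/2) := by
  rcases abs_cases c with ⟨h, _⟩ | ⟨h, _⟩
  · rw [h]
  · rw [h, show (1 + -c)/2 = 1 - (1+c)/2 by ring, binEnt_one_sub]

lemma binEnt_anti {r m : ℝ} (hr : 0 ≤ r) (hrm : r ≤ m) (hm : m ≤ 1) :
    binEnt ((1+m)/2) ≤ binEnt ((1+r)/2) := by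
  rw [binEnt_eq, binEnt_eq]
  have h2 : (0:ℝ) < Real.log 2 := Real.log_pos one_lt_two
  have hmem1 : (1+r)/2 ∈ Set.Icc (2⁻¹:ℝ) 1 := Set.mem_Icc.mpr ⟨by norm_num; linarith, by linarith⟩
  have hmem2 : (1+m)/2 ∈ Set.Icc (2⁻¹:ℝ) 1 := Set.mem_Icc.mpr ⟨by norm_num; linarith, by linarith⟩
  have := Real.binEntropy_strictAntiOn.antitoneOn hmem1 hmem2 (by linarith)
  exact div_le_div_of_nonneg_right this h2.le

/-- The minimum output entropy of the covariant Pauli channel over all Bloch states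
equals `h(ξ)`, with `ξ = (1+p₀-p₃)/2` if `(p₀-p₃)² ≥ (2p₀+2p₃-1)²` and `ξ = p₀+p₃`
otherwise. -/
theorem pauliChannel_min_output_entropy (p0 p1 p3 : ℝ) (h0 : 0 ≤ p0) (h1 : 0 ≤ p1)
    (h3 : 0 ≤ p3) (hsum : p0 + 2 * p1 + p3 = 1) :
    IsLeast
      {s : ℝ | ∃ x y z : ℝ, x ^ 2 + y ^ 2 + z ^ 2 ≤ 1 ∧
        s = vN (pauliChannel p0 p1 p3 (blochState x y z))}
      (binEnt (if (p0 - p3) ^ 2 ≥ (2 * p0 + 2 * p3 - 1) ^ 2 then (1 + p0 - p3) / 2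
               else p0 + p3)) := by
  have key : ∀ x y z : ℝ, vN (pauliChannel p0 p1 p3 (blochState x y z)) =
      binEnt ((1 + Real.sqrt ((p0-p3)^2*(x^2+y^2) + (2*p0+2*p3-1)^2*z^2))/2) := by
    intro x y z
    rw [channel_eq]
    apply vN_HM
    · linarith
    · have hS0 : 0 ≤ (p0-p3)^2*(x^2+y^2) + (2*p0+2*p3-1)^2*z^2 := by positivity
      rw [Real.sq_sqrt hS0]
      linear_combination ((p0+2*p1+p3+1)/4 + ((2*p0+2*p3-1) + (p0-2*p1+p3))*z^2/4) * hsum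
  constructor
  · -- membership
    split_ifs with hcase
    · refine ⟨1, 0, 0, by norm_num, ?_⟩
      rw [channel_eq]
      rw [vN_HM _ _ _ _ (p0 - p3) (by linarith)
        (by linear_combination ((p0+2*p1+p3+1)/4) * hsum)]
      congr 1
      ring
    · refine ⟨0, 0, 1, by norm_num, ?_⟩
      rw [channel_eq]
      rw [vN_HM _ _ _ _ (2*p0+2*p3-1) (by linarith)
        (by linear_combination ((p0+2*p1+p3+1 + (2*p0+2*p3-1) + (p0-2*p1+p3))/4) * hsum)]
      congr 1
      ring
  · -- lower bound
    rintro s ⟨x, y, z, hball, rfl⟩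
    rw [key x y z]
    set S := (p0-p3)^2*(x^2+y^2) + (2*p0+2*p3-1)^2*z^2 with hSdef
    have hS0 : 0 ≤ S := by positivity
    have hr0 : 0 ≤ Real.sqrt S := Real.sqrt_nonneg _
    split_ifs with hcase
    · have hm1 : |p0 - p3| ≤ 1 := abs_le.mpr ⟨by linarith, by linarith⟩
      have hrm : Real.sqrt S ≤ |p0 - p3| := by
        rw [← Real.sqrt_sq_eq_abs]
        apply Real.sqrt_le_sqrt
        have t1 : 0 ≤ ((p0-p3)^2 - (2*p0+2*p3-1)^2) * z^2 :=
          mul_nonneg (by linarith) (sq_nonneg z)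
        have t2 : 0 ≤ (p0-p3)^2 * (1 - (x^2+y^2+z^2)) :=
          mul_nonneg (sq_nonneg _) (by linarith)
        nlinarith [t1, t2]
      calc binEnt ((1+p0-p3)/2) = binEnt ((1+|p0-p3|)/2) := by
            rw [show (1+p0-p3)/2 = (1+(p0-p3))/2 by ring, binEnt_abs]
        _ ≤ binEnt ((1+Real.sqrt S)/2) := binEnt_anti hr0 hrm hm1
    · push_neg at hcase
      have hm1 : |2*p0+2*p3-1| ≤ 1 := abs_le.mpr ⟨by linarith, by linarith⟩
      have hrm : Real.sqrt S ≤ |2*p0+2*p3-1| := by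
        rw [← Real.sqrt_sq_eq_abs]
        apply Real.sqrt_le_sqrt
        have t1 : 0 ≤ ((2*p0+2*p3-1)^2 - (p0-p3)^2) * (x^2+y^2) :=
          mul_nonneg (by linarith) (by positivity)
        have t2 : 0 ≤ (2*p0+2*p3-1)^2 * (1 - (x^2+y^2+z^2)) :=
          mul_nonneg (sq_nonneg _) (by linarith)
        nlinarith [t1, t2]
      calc binEnt (p0+p3) = binEnt ((1+|2*p0+2*p3-1|)/2) := by
            rw [show (p0+p3 : ℝ) = (1+(2*p0+2*p3-1))/2 by ring, binEnt_abs]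
        _ ≤ binEnt ((1+Real.sqrt S)/2) := binEnt_anti hr0 hrm hm1

end
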